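/- If X is Lindelöf and countably tight, then X contains no free sequence of length ω₁. -/

import Mathlib

open Set Filter Topology TopologicalSpace

universe u

/-- `C_p(X)`: continuous real-valued functions on `X` with the topology of pointwise
convergence (subspace of `X → ℝ` with the product topology). -/
abbrev Cp (X : Type*) [TopologicalSpace X] : Type _ := {f : X → ℝ // Continuous f}

/-- A space is realcompact if it embeds as a closed subspace of a power of `ℝ`. -/
def Realcompact (X : Type u) [TopologicalSpace X] : Prop :=
  ∃ (I : Type u) (f : X → I → ℝ), IsClosedEmbedding f

/-- `Y` is countably compact in `X`: every infinite subset of `Y` has a limit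
(accumulation) point in `X`. -/
def CountablyCompactIn {X : Type*} [TopologicalSpace X] (Y : Set X) : Prop :=
  ∀ A ⊆ Y, A.Infinite → ∃ x : X, AccPt x (𝓟 A)

/-- A space is countably compact: every countable open cover has a finite subcover. -/
def CountablyCompact (X : Type*) [TopologicalSpace X] : Prop :=
  ∀ U : ℕ → Set X, (∀ n, IsOpen (U n)) → (⋃ n, U n) = univ →
    ∃ t : Finset ℕ, (⋃ n ∈ t, U n) = univ

/-- A space is countably tight if every point in the closure of a set is in the
closure of a countable subset. -/
def CountablyTight (X : Type*) [TopologicalSpace X] : Prop :=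
  ∀ (A : Set X) (x : X), x ∈ closure A → ∃ B ⊆ A, B.Countable ∧ x ∈ closure B

/-- Property wD: for every countably infinite closed discrete subspace `{d n}` there is an
infinite `S ⊆ ℕ` and a discrete family of open sets `U n` (`n ∈ S`) with `d n ∈ U n`. -/
def WD (X : Type*) [TopologicalSpace X] : Prop :=
  ∀ d : ℕ → X, Function.Injective d → IsClosed (Set.range d) →
    DiscreteTopology (Set.range d) →
    ∃ (S : Set ℕ) (U : ℕ → Set X), S.Infinite ∧ (∀ n ∈ S, IsOpen (U n)) ∧
      (∀ n ∈ S, d n ∈ U n) ∧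
      ∀ x : X, ∃ V ∈ 𝓝 x, {n | n ∈ S ∧ (V ∩ U n).Nonempty}.Subsingleton

/-- `N` is a network for `X`. -/
def IsNetwork {X : Type*} [TopologicalSpace X] (N : Set (Set X)) : Prop :=
  ∀ (x : X) (U : Set X), IsOpen U → x ∈ U → ∃ A ∈ N, x ∈ A ∧ A ⊆ U


/-- Any countable set of ordinals below `ω₁` is bounded below `ω₁`. -/
lemma aux_bounded_below_omega1 {S : Set Ordinal.{0}} (hS : S.Countable)
    (h : ∀ α ∈ S, α < (Cardinal.aleph 1).ord) :
    ∃ γ < (Cardinal.aleph 1).ord, ∀ α ∈ S, α ≤ γ := by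
  rcases S.eq_empty_or_nonempty with rfl | hne
  · exact ⟨0, by simpa using (Cardinal.isSuccLimit_ord (Cardinal.aleph0_le_aleph 1)).pos, by simp⟩
  obtain ⟨f, rfl⟩ := hS.exists_eq_range hne
  refine ⟨iSup f, ?_, fun α hα => ?_⟩
  · apply Cardinal.iSup_lt_ord_of_isRegular Cardinal.isRegular_aleph_one
    · simpa using Cardinal.aleph0_lt_aleph_one
    · exact fun n => h _ (mem_range_self n)
  · obtain ⟨n, rfl⟩ := hα
    exact Ordinal.le_iSup f n

theorem no_uncountable_free_sequence {X : Type*} [TopologicalSpace X]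
    [LindelofSpace X] (ht : CountablyTight X) :
    ¬ ∃ x : Ordinal.{0} → X, ∀ β < (Cardinal.aleph 1).ord,
      Disjoint (closure (x '' {α | α < β}))
        (closure (x '' {α | β ≤ α ∧ α < (Cardinal.aleph 1).ord})) := by
  rintro ⟨x, hx⟩
  set o1 : Ordinal.{0} := (Cardinal.aleph 1).ord with ho1
  have hlim : Order.IsSuccLimit o1 := Cardinal.isSuccLimit_ord (Cardinal.aleph0_le_aleph 1)
  set F : Ordinal → Set X := fun β => closure (x '' {α | β ≤ α ∧ α < o1}) with hF
  have hFmono : ∀ {β β'}, β ≤ β' → F β' ⊆ F β := by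
    intro β β' hle
    exact closure_mono (image_mono (fun α hα => ⟨hle.trans hα.1, hα.2⟩))
  have hFmem : ∀ β < o1, x β ∈ F β := fun β hβ =>
    subset_closure ⟨β, ⟨le_refl β, hβ⟩, rfl⟩
  -- injectivity on ordinals < ω₁
  have hinj : ∀ α < o1, ∀ α' < o1, x α = x α' → α = α' := by
    intro α hα α' hα' heq
    by_contra hne
    rcases Ne.lt_or_gt hne with hlt | hlt
    · have hβ : Order.succ α < o1 := hlim.succ_lt hα
      exact Set.disjoint_left.mp (hx _ hβ)
        (subset_closure ⟨α, Order.lt_succ α, rfl⟩)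
        (subset_closure ⟨α', ⟨Order.succ_le_of_lt hlt, hα'⟩, heq.symm⟩)
    · have hβ : Order.succ α' < o1 := hlim.succ_lt hα'
      exact Set.disjoint_left.mp (hx _ hβ)
        (subset_closure ⟨α', Order.lt_succ α', rfl⟩)
        (subset_closure ⟨α, ⟨Order.succ_le_of_lt hlt, hα⟩, heq⟩)
  -- find a point in the intersection of all tails
  obtain ⟨p, hp⟩ : ∃ p, ∀ β < o1, p ∈ F β := by
    by_contra h
    push_neg at h
    have hcov : (univ : Set X) ⊆ ⋃ i : {β : Ordinal // β < o1}, (F i.1)ᶜ := by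
      intro p _
      obtain ⟨β, hβ, hpβ⟩ := h p
      exact mem_iUnion.mpr ⟨⟨β, hβ⟩, hpβ⟩
    obtain ⟨r, hrc, hrcov⟩ := isLindelof_univ.elim_countable_subcover
      (fun i : {β : Ordinal // β < o1} => (F i.1)ᶜ)
      (fun i => isClosed_closure.isOpen_compl) hcov
    obtain ⟨γ, hγ, hγub⟩ := aux_bounded_below_omega1 (hrc.image Subtype.val)
      (by rintro α ⟨i, _, rfl⟩; exact i.2)
    have hmem : x γ ∈ ⋃ i ∈ r, (F i.1)ᶜ := hrcov (mem_univ _)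
    obtain ⟨i, hir, hxi⟩ := mem_iUnion₂.mp hmem
    exact hxi (hFmono (hγub i.1 ⟨i, hir, rfl⟩) (hFmem γ hγ))
  -- countable tightness
  have hp0 : p ∈ closure (x '' {α | (0:Ordinal) ≤ α ∧ α < o1}) := hp 0 hlim.pos
  obtain ⟨B, hBsub, hBc, hpB⟩ := ht _ p hp0
  set S : Set Ordinal := {α | α < o1 ∧ x α ∈ B} with hS
  have hSc : S.Countable := by
    refine MapsTo.countable_of_injOn (f := x) (t := B) (fun α hα => hα.2) ?_ hBc
    intro α hα α' hα' heq
    exact hinj α hα.1 α' hα'.1 heq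
  obtain ⟨γ, hγ, hγub⟩ := aux_bounded_below_omega1 hSc (fun α hα => hα.1)
  have hβ : Order.succ γ < o1 := hlim.succ_lt hγ
  have hBsub' : B ⊆ x '' {α | α < Order.succ γ} := by
    intro b hb
    obtain ⟨α, ⟨_, hα1⟩, rfl⟩ := hBsub hb
    exact ⟨α, Order.lt_succ_of_le (hγub α ⟨hα1, hb⟩), rfl⟩
  exact Set.disjoint_left.mp (hx _ hβ)
    ((closure_mono hBsub') hpB) (hp _ hβ)
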